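/- Let K be a Killing field on an open set U ⊆ ℝ³. Then K × curl K = ∇|K|² on U, and the Lie bracket of K with its curl vanishes: [K, curl K] = 0 on U. -/

import Mathlib

noncomputable section

/-- Vectors in ℝ³. -/
abbrev V3 : Type := Fin 3 → ℝ

/-- Euclidean inner product on ℝ³. -/
def dot3 (u v : V3) : ℝ := ∑ i, u i * v i

/-- Cross product on ℝ³. -/
def cross3 (u v : V3) : V3 :=
  ![u 1 * v 2 - u 2 * v 1, u 2 * v 0 - u 0 * v 2, u 0 * v 1 - u 1 * v 0]

/-- Partial derivative ∂ᵢ of a scalar function. -/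
def pd (i : Fin 3) (f : V3 → ℝ) (x : V3) : ℝ := fderiv ℝ f x (Pi.single i 1)

/-- Gradient of a scalar function. -/
def grad3 (f : V3 → ℝ) (x : V3) : V3 := fun i => pd i f x

/-- Divergence of a vector field. -/
def div3 (X : V3 → V3) (x : V3) : ℝ := ∑ i, fderiv ℝ X x (Pi.single i 1) i

/-- Curl of a vector field. -/
def curl3 (X : V3 → V3) (x : V3) : V3 :=
  ![pd 1 (fun y => X y 2) x - pd 2 (fun y => X y 1) x,
    pd 2 (fun y => X y 0) x - pd 0 (fun y => X y 2) x,
    pd 0 (fun y => X y 1) x - pd 1 (fun y => X y 0) x]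

/-- Lie bracket of vector fields: [X,Y](x) = DY(x)X(x) − DX(x)Y(x). -/
def bracket3 (X Y : V3 → V3) (x : V3) : V3 := fderiv ℝ Y x (X x) - fderiv ℝ X x (Y x)

/-- `K` is a Killing field of the Euclidean metric on `U`: `DK(x)` is antisymmetric on `U`. -/
def IsKillingOn (K : V3 → V3) (U : Set V3) : Prop :=
  ∀ x ∈ U, ∀ v w : V3, dot3 (fderiv ℝ K x v) w + dot3 v (fderiv ℝ K x w) = 0

lemma dot3_single (u : V3) (i : Fin 3) : dot3 u (Pi.single i 1) = u i := by
  simp [dot3, Pi.single_apply]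

lemma dot3_comm (u v : V3) : dot3 u v = dot3 v u := by
  simp [dot3, mul_comm]

open ContinuousLinearMap in
/-- for a Killing field K on an open set U ⊆ ℝ³ one has
K × curl K = ∇|K|² and [K, curl K] = 0 on U. -/
theorem killing_cross_curl_and_bracket (U : Set V3) (hU : IsOpen U)
    (K : V3 → V3) (hKsmooth : ContDiffOn ℝ (⊤ : ℕ∞) K U)
    (hKill : IsKillingOn K U) :
    ∀ x ∈ U,
      cross3 (K x) (curl3 K x) = grad3 (fun y => dot3 (K y) (K y)) x ∧
      bracket3 K (fun y => curl3 K y) x = 0 := by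
  intro x hx
  have hU' : U ∈ nhds x := hU.mem_nhds hx
  have hAt : ∀ y ∈ U, ContDiffAt ℝ ((⊤:ℕ∞) : WithTop ℕ∞) K y := fun y hy =>
    hKsmooth.contDiffAt (hU.mem_nhds hy)
  have hdK : ∀ y ∈ U, DifferentiableAt ℝ K y := fun y hy =>
    (hAt y hy).differentiableAt (by simp)
  have h2 : DifferentiableAt ℝ (fderiv ℝ K) x :=
    ((hAt x hx).fderiv_right (m := 1)
      (by exact_mod_cast ENat.natCast_le_of_coe_top_le_withTop le_rfl 2)).differentiableAt one_ne_zero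
  set f'' := fderiv ℝ (fderiv ℝ K) x with hf''def
  have hsymm : ∀ v w, f'' v w = f'' w v :=
    (hAt x hx).isSymmSndFDerivAt
      (by rw [minSmoothness_of_isRCLikeNormedField]; exact_mod_cast ENat.natCast_le_of_coe_top_le_withTop le_rfl 2)
  -- derivative of `y ↦ fderiv ℝ K y v`
  have happ : ∀ v : V3, HasFDerivAt (fun y => fderiv ℝ K y v)
      ((ContinuousLinearMap.apply ℝ V3 v).comp f'') x :=
    fun v => (ContinuousLinearMap.apply ℝ V3 v).hasFDerivAt.comp x h2.hasFDerivAt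
  have happc : ∀ (v : V3) (i : Fin 3), HasFDerivAt (fun y => fderiv ℝ K y v i)
      ((proj i : V3 →L[ℝ] ℝ).comp ((ContinuousLinearMap.apply ℝ V3 v).comp f'')) x :=
    fun v i => (proj i : V3 →L[ℝ] ℝ).hasFDerivAt.comp x (happ v)
  -- differentiate the Killing identity
  have hT : ∀ u v w : V3, dot3 (f'' u v) w + dot3 v (f'' u w) = 0 := by
    intro u v w
    have hD : HasFDerivAt
        (fun y => dot3 (fderiv ℝ K y v) w + dot3 v (fderiv ℝ K y w))
        ((∑ i : Fin 3, (w i) • ((proj i : V3 →L[ℝ] ℝ).comp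
            ((ContinuousLinearMap.apply ℝ V3 v).comp f''))) +
         (∑ i : Fin 3, (v i) • ((proj i : V3 →L[ℝ] ℝ).comp
            ((ContinuousLinearMap.apply ℝ V3 w).comp f'')))) x := by
      have h1 : HasFDerivAt (fun y => ∑ i : Fin 3, fderiv ℝ K y v i * w i)
          (∑ i : Fin 3, (w i) • ((proj i : V3 →L[ℝ] ℝ).comp
            ((ContinuousLinearMap.apply ℝ V3 v).comp f''))) x :=
        HasFDerivAt.fun_sum (fun i _ => (happc v i).mul_const (w i))
      have h2' : HasFDerivAt (fun y => ∑ i : Fin 3, v i * fderiv ℝ K y w i)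
          (∑ i : Fin 3, (v i) • ((proj i : V3 →L[ℝ] ℝ).comp
            ((ContinuousLinearMap.apply ℝ V3 w).comp f''))) x :=
        HasFDerivAt.fun_sum (fun i _ => (happc w i).const_mul (v i))
      exact h1.add h2'
    have h0 : HasFDerivAt
        (fun y => dot3 (fderiv ℝ K y v) w + dot3 v (fderiv ℝ K y w))
        (0 : V3 →L[ℝ] ℝ) x := by
      apply (hasFDerivAt_const (0:ℝ) x).congr_of_eventuallyEq
      filter_upwards [hU'] with y hy using (hKill y hy v w)
    have heq := hD.unique h0
    have := congrArg (fun (L : V3 →L[ℝ] ℝ) => L u) heq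
    simpa [dot3, mul_comm] using this
  -- the second derivative vanishes
  have hTzero : ∀ u v w : V3, dot3 (f'' u v) w = 0 := by
    have hanti : ∀ u v w : V3, dot3 (f'' u v) w = - dot3 (f'' u w) v := by
      intro u v w
      have h := hT u v w
      rw [dot3_comm v] at h
      linarith
    have hsy : ∀ u v w : V3, dot3 (f'' u v) w = dot3 (f'' v u) w := by
      intro u v w; rw [hsymm u v]
    intro u v w
    have a1 := hanti u v w
    have a2 := hsy u w v
    have a3 := hanti w u v
    have a4 := hsy w v u
    have a5 := hanti v w u
    have a6 := hsy v u w
    linarith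
  have hB : ∀ u v : V3, f'' u v = 0 := by
    intro u v
    funext i
    have := hTzero u v (Pi.single i 1)
    rw [dot3_single] at this
    simpa using this
  -- first partials of K on U
  have hpdval : ∀ y ∈ U, ∀ (i j : Fin 3),
      pd j (fun z => K z i) y = fderiv ℝ K y (Pi.single j 1) i := by
    intro y hy i j
    have hc : HasFDerivAt (fun z => K z i)
        ((proj i : V3 →L[ℝ] ℝ).comp (fderiv ℝ K y)) y :=
      (proj i : V3 →L[ℝ] ℝ).hasFDerivAt.comp y (hdK y hy).hasFDerivAt
    rw [pd, hc.fderiv]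
    rfl
  -- each partial-derivative field (j,i) ↦ ∂ⱼKᵢ has zero derivative at x
  have hcomp0 : ∀ (i j : Fin 3),
      HasFDerivAt (fun y => pd j (fun z => K z i) y) (0 : V3 →L[ℝ] ℝ) x := by
    intro i j
    have hP : HasFDerivAt (fun y => fderiv ℝ K y (Pi.single j 1) i) (0 : V3 →L[ℝ] ℝ) x := by
      have h := happc (Pi.single j 1) i
      have hz : ((proj i : V3 →L[ℝ] ℝ).comp
          ((ContinuousLinearMap.apply ℝ V3 (Pi.single j 1)).comp f'')) = 0 := by
        ext u
        simp [hB u (Pi.single j 1)]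
      rwa [hz] at h
    apply hP.congr_of_eventuallyEq
    filter_upwards [hU'] with y hy using (hpdval y hy i j)
  -- hence the curl has zero derivative at x
  have hcurl0 : HasFDerivAt (fun y => curl3 K y) (0 : V3 →L[ℝ] V3) x := by
    apply hasFDerivAt_pi''
    intro i
    have h0 : ((proj i : V3 →L[ℝ] ℝ).comp (0 : V3 →L[ℝ] V3)) = (0 : V3 →L[ℝ] ℝ) := by
      ext u; simp
    rw [h0]
    fin_cases i
    · exact (by simpa using ((hcomp0 2 1).fun_sub (hcomp0 1 2)) :
        HasFDerivAt (fun y => pd 1 (fun z => K z 2) y - pd 2 (fun z => K z 1) y)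
          (0 : V3 →L[ℝ] ℝ) x).congr_of_eventuallyEq
        (Filter.Eventually.of_forall (fun y => by simp [curl3]))
    · exact (by simpa using ((hcomp0 0 2).fun_sub (hcomp0 2 0)) :
        HasFDerivAt (fun y => pd 2 (fun z => K z 0) y - pd 0 (fun z => K z 2) y)
          (0 : V3 →L[ℝ] ℝ) x).congr_of_eventuallyEq
        (Filter.Eventually.of_forall (fun y => by simp [curl3]))
    · exact (by simpa using ((hcomp0 1 0).fun_sub (hcomp0 0 1)) :
        HasFDerivAt (fun y => pd 0 (fun z => K z 1) y - pd 1 (fun z => K z 0) y)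
          (0 : V3 →L[ℝ] ℝ) x).congr_of_eventuallyEq
        (Filter.Eventually.of_forall (fun y => by simp [curl3]))
  -- notation for first partials at x
  set A : Fin 3 → Fin 3 → ℝ := fun a b => fderiv ℝ K x (Pi.single a 1) b with hA
  have hanti : ∀ a b, A a b = - A b a := by
    intro a b
    have h := hKill x hx (Pi.single a 1) (Pi.single b 1)
    rw [dot3_single, dot3_comm, dot3_single] at h
    simp only [hA]
    linarith
  have hcurlval : curl3 K x = ![A 1 2 - A 2 1, A 2 0 - A 0 2, A 0 1 - A 1 0] := by
    funext i
    fin_cases i <;>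
      simp [curl3, hpdval x hx, hA]
  -- gradient of |K|²
  have hgrad : ∀ i : Fin 3,
      grad3 (fun y => dot3 (K y) (K y)) x i = ∑ j : Fin 3, 2 * (K x j * A i j) := by
    intro i
    have hj : ∀ j : Fin 3, HasFDerivAt (fun y => K y j)
        ((proj j : V3 →L[ℝ] ℝ).comp (fderiv ℝ K x)) x :=
      fun j => (proj j : V3 →L[ℝ] ℝ).hasFDerivAt.comp x (hdK x hx).hasFDerivAt
    have hsum : HasFDerivAt (fun y => dot3 (K y) (K y))
        (∑ j : Fin 3, (K x j • ((proj j : V3 →L[ℝ] ℝ).comp (fderiv ℝ K x)) +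
          K x j • ((proj j : V3 →L[ℝ] ℝ).comp (fderiv ℝ K x)))) x := by
      have : HasFDerivAt (fun y => ∑ j : Fin 3, K y j * K y j)
          (∑ j : Fin 3, (K x j • ((proj j : V3 →L[ℝ] ℝ).comp (fderiv ℝ K x)) +
            K x j • ((proj j : V3 →L[ℝ] ℝ).comp (fderiv ℝ K x)))) x :=
        HasFDerivAt.fun_sum (fun j _ => (hj j).fun_mul (hj j))
      exact this
    rw [grad3]
    simp only [pd, hsum.fderiv]
    rw [Fin.sum_univ_three, Fin.sum_univ_three]
    simp only [ContinuousLinearMap.add_apply, ContinuousLinearMap.coe_smul', Pi.smul_apply,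
      ContinuousLinearMap.coe_comp', Function.comp_apply, ContinuousLinearMap.proj_apply,
      smul_eq_mul, hA]
    ring
  -- expansion of fderiv K x applied to a vector
  have happly : ∀ c : V3, ∀ i : Fin 3, fderiv ℝ K x c i = ∑ a : Fin 3, c a * A a i := by
    intro c i
    have hc : c = ∑ a : Fin 3, c a • (Pi.single a 1 : V3) := by
      funext j; simp [Finset.sum_apply, Pi.single_apply]
    conv_lhs => rw [hc]
    rw [map_sum]
    simp [hA, Finset.sum_apply]
  constructor
  · -- cross product identity
    funext i
    have h00 : A 0 0 = 0 := by have := hanti 0 0; linarith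
    have h11 : A 1 1 = 0 := by have := hanti 1 1; linarith
    have h22 : A 2 2 = 0 := by have := hanti 2 2; linarith
    have h10 := hanti 1 0
    have h20 := hanti 2 0
    have h21 := hanti 2 1
    fin_cases i <;>
      · rw [hgrad, hcurlval]
        simp [cross3, Fin.sum_univ_three]
        simp only [h00, h11, h22, h10, h20, h21]
        ring
  · -- bracket identity
    have hfc : fderiv ℝ (fun y => curl3 K y) x = 0 := hcurl0.fderiv
    rw [bracket3, hfc]
    funext i
    have h00 : A 0 0 = 0 := by have := hanti 0 0; linarith
    have h10 := hanti 1 0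
    have h20 := hanti 2 0
    have h21 := hanti 2 1
    have h11 : A 1 1 = 0 := by have := hanti 1 1; linarith
    have h22 : A 2 2 = 0 := by have := hanti 2 2; linarith
    have := happly (curl3 K x) i
    rw [hcurlval] at this
    fin_cases i <;>
      · simp only [Pi.sub_apply, Pi.zero_apply, ContinuousLinearMap.zero_apply]
        rw [hcurlval, this]
        simp [Fin.sum_univ_three]
        simp only [h00, h11, h22, h10, h20, h21]
        ring
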